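/- Let X, Y ⊆ 2^ω be disjoint sets and let M = X ∪ Y with the subspace topology from 2^ω. Suppose X² \ Δ is relatively F_σ in X² ∪ Y², i.e., there is an F_σ subset H of 2^ω × 2^ω with H ∩ (X² ∪ Y²) = X² \ Δ, where Δ = {(x,x) : x ∈ 2^ω}. Let M(X) denote M with the topology generated by the open sets of M together with the singletons {x} for x ∈ X, and give M(X) × M(X) the product topology. Then the subset M₁ = (X² \ Δ) ∪ Y², with the subspace topology inherited from M(X) × M(X), is metrizable. -/

import Mathlib

open Topology

/-- A set is `F_σ` if it is a countable union of closed sets. -/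
def IsFsigma {Z : Type*} [TopologicalSpace Z] (S : Set Z) : Prop :=
  ∃ C : ℕ → Set Z, (∀ n, IsClosed (C n)) ∧ S = ⋃ n, C n
/-- The Michael-line-like topology `M(X)`: the topology generated by the open
sets of `M` together with the singletons `{x}` for `x ∈ X`. -/
def michael {M : Type*} (t : TopologicalSpace M) (X : Set M) : TopologicalSpace M :=
  TopologicalSpace.generateFrom ({U | IsOpen[t] U} ∪ {S | ∃ x ∈ X, S = {x}})

theorem michael_le {M : Type*} (t : TopologicalSpace M) (X : Set M) : michael t X ≤ t := by
  intro U hU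
  exact TopologicalSpace.GenerateOpen.basic U (Or.inl hU)

theorem michael_singleton {M : Type*} {t : TopologicalSpace M} {X : Set M} {x : M} (hx : x ∈ X) :
    IsOpen[michael t X] {x} :=
  TopologicalSpace.GenerateOpen.basic _ (Or.inr ⟨x, hx, rfl⟩)

theorem michael_exists_open {M : Type*} {t : TopologicalSpace M} {X : Set M} {U : Set M}
    (hU : IsOpen[michael t X] U) :
    ∀ y ∈ U, y ∉ X → ∃ A, IsOpen[t] A ∧ y ∈ A ∧ A ⊆ U := by
  have hU' : TopologicalSpace.GenerateOpen ({V | IsOpen[t] V} ∪ {S | ∃ x ∈ X, S = {x}}) U := hU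
  clear hU
  induction hU' with
  | basic s hs =>
    rcases hs with hs | ⟨x, hx, rfl⟩
    · exact fun y hy _ => ⟨s, hs, hy, subset_rfl⟩
    · intro y hy hyX
      rcases hy with rfl
      exact absurd hx hyX
  | univ => exact fun y _ _ => ⟨Set.univ, isOpen_univ, trivial, subset_rfl⟩
  | inter s t' hs ht ihs iht =>
    intro y hy hyX
    obtain ⟨A, hA, hyA, hAs⟩ := ihs y hy.1 hyX
    obtain ⟨A', hA', hyA', hA's⟩ := iht y hy.2 hyX
    exact ⟨A ∩ A', hA.inter hA', ⟨hyA, hyA'⟩, Set.inter_subset_inter hAs hA's⟩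
  | sUnion S hS ih =>
    intro y hy hyX
    obtain ⟨s, hsS, hys⟩ := hy
    obtain ⟨A, hA, hyA, hAs⟩ := ih s hsS y hys hyX
    exact ⟨A, hA, hyA, hAs.trans (Set.subset_sUnion_of_mem hsS)⟩

/-- Version for subtypes: a michael-open set around a point not in `X` contains the trace
of an open set of the ambient space. -/
theorem michael_sub_exists_open {B' : Type*} [tB : TopologicalSpace B'] {Z : Set B'}
    {X : Set ↥Z} {U : Set ↥Z}
    (hU : IsOpen[michael instTopologicalSpaceSubtype X] U) {y : ↥Z} (hy : y ∈ U) (hyX : y ∉ X) :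
    ∃ W : Set B', IsOpen W ∧ (y : B') ∈ W ∧ (Subtype.val ⁻¹' W) ⊆ U := by
  obtain ⟨A, hA, hyA, hAU⟩ := michael_exists_open hU y hy hyX
  obtain ⟨W, hW, hWA⟩ := isOpen_induced_iff.mp hA
  exact ⟨W, hW, by rw [← hWA] at hyA; exact hyA, by rw [hWA]; exact hAU⟩

theorem exists_dist (Z : Type*) [tZ : TopologicalSpace Z] [h : TopologicalSpace.MetrizableSpace Z] :
    ∃ d : Z → Z → ℝ, (∀ p, d p p = 0) ∧ (∀ p q, 0 ≤ d p q) ∧ (∀ p q, d p q = d q p) ∧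
      (∀ p q r, d p r ≤ d p q + d q r) ∧ (∀ p q, p ≠ q → 0 < d p q) ∧
      (∀ (p : Z) (ε : ℝ), IsOpen {q | d p q < ε}) ∧
      (∀ (p : Z) (s : Set Z), s ∈ nhds p ↔ ∃ ε > 0, {q | d p q < ε} ⊆ s) := by
  let m : MetricSpace Z := TopologicalSpace.metrizableSpaceMetric Z
  letI := m
  refine ⟨dist, dist_self, fun p q => dist_nonneg, dist_comm, dist_triangle,
    fun p q hne => dist_pos.mpr hne, fun p ε => ?_, fun p s => ?_⟩
  · have : {q | dist p q < ε} = Metric.ball p ε := by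
      ext q; simp [Metric.mem_ball, dist_comm]
    rw [this]; exact Metric.isOpen_ball
  · rw [(Metric.nhds_basis_ball).mem_iff]
    refine exists_congr fun ε => and_congr_right fun _ => ?_
    constructor
    · intro hsub q hq; exact hsub (by simpa [Metric.mem_ball, dist_comm] using hq)
    · intro hsub q hq; exact hsub (by simpa [Metric.mem_ball, dist_comm] using hq)

/-- If `X, Y ⊆ 2^ω` are disjoint, `M = X ∪ Y` with the subspace topology, and
`X² \ Δ` is relatively `F_σ` in `X² ∪ Y²`, then `M₁ = (X² \ Δ) ∪ Y²` is a
metrizable subspace of `M(X) × M(X)`. -/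
theorem stmt14 (X Y : Set (ℕ → Bool)) (hdisj : Disjoint X Y)
    (H : Set ((ℕ → Bool) × (ℕ → Bool))) (hH : IsFsigma H)
    (hHcap : H ∩ (X ×ˢ X ∪ Y ×ˢ Y) = (X ×ˢ X) \ Set.diagonal (ℕ → Bool)) :
    @TopologicalSpace.MetrizableSpace
      ↥({p : ↥(X ∪ Y) × ↥(X ∪ Y) |
          ((p.1 : ℕ → Bool) ∈ X ∧ (p.2 : ℕ → Bool) ∈ X ∧ p.1 ≠ p.2) ∨
          ((p.1 : ℕ → Bool) ∈ Y ∧ (p.2 : ℕ → Bool) ∈ Y)})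
      (@instTopologicalSpaceSubtype (↥(X ∪ Y) × ↥(X ∪ Y)) _
        (@instTopologicalSpaceProd (↥(X ∪ Y)) (↥(X ∪ Y))
          (michael inferInstance {m : ↥(X ∪ Y) | (m : ℕ → Bool) ∈ X})
          (michael inferInstance {m : ↥(X ∪ Y) | (m : ℕ → Bool) ∈ X}))) := by
  classical
  obtain ⟨C, hCcl, rfl⟩ := hH
  obtain ⟨d, hd0, hdnn, hdc, hdt, hdpos, hdball, hdnhds⟩ :=
    exists_dist ((ℕ → Bool) × (ℕ → Bool))
  letI tX : TopologicalSpace ↥(X ∪ Y) :=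
    michael inferInstance {m : ↥(X ∪ Y) | (m : ℕ → Bool) ∈ X}
  letI tP : TopologicalSpace (↥(X ∪ Y) × ↥(X ∪ Y)) := instTopologicalSpaceProd
  set S : Set (↥(X ∪ Y) × ↥(X ∪ Y)) :=
    {p : ↥(X ∪ Y) × ↥(X ∪ Y) |
          ((p.1 : ℕ → Bool) ∈ X ∧ (p.2 : ℕ → Bool) ∈ X ∧ p.1 ≠ p.2) ∨
          ((p.1 : ℕ → Bool) ∈ Y ∧ (p.2 : ℕ → Bool) ∈ Y)} with hSdef
  letI tS : TopologicalSpace ↥S := instTopologicalSpaceSubtype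
  -- the projection to the plain Cantor square
  set π : ↥S → (ℕ → Bool) × (ℕ → Bool) := fun a => ((a.1.1 : ℕ → Bool), (a.1.2 : ℕ → Bool))
    with hπdef
  have hπinj : Function.Injective π := by
    intro a b hab
    apply Subtype.ext
    apply Prod.ext
    · exact Subtype.ext (congrArg Prod.fst hab)
    · exact Subtype.ext (congrArg Prod.snd hab)
  -- no C n meets Y × Y
  have hCY : ∀ (n : ℕ) (p : (ℕ → Bool) × (ℕ → Bool)), p ∈ Y ×ˢ Y → p ∉ C n := by
    intro n p hpY hpC
    have hmem : p ∈ (⋃ n, C n) ∩ (X ×ˢ X ∪ Y ×ˢ Y) :=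
      ⟨Set.mem_iUnion.2 ⟨n, hpC⟩, Or.inr hpY⟩
    rw [hHcap] at hmem
    exact Set.disjoint_left.mp hdisj hmem.1.1 hpY.1
  -- every off-diagonal point of X × X lies in some C n
  have hXD : ∀ p : (ℕ → Bool) × (ℕ → Bool), p ∈ X ×ˢ X → p.1 ≠ p.2 → ∃ n, p ∈ C n := by
    intro p hpX hne
    have hmem : p ∈ X ×ˢ X \ Set.diagonal (ℕ → Bool) := ⟨hpX, hne⟩
    rw [← hHcap] at hmem
    exact Set.mem_iUnion.1 hmem.1
  -- case facts
  have hcaseX : ∀ a : ↥S, (a.1.1 : ℕ → Bool) ∈ X → ∃ n, π a ∈ C n := by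
    intro a h1
    rcases a.2 with ⟨hx1, hx2, hne⟩ | ⟨hy1, hy2⟩
    · refine hXD (π a) ⟨hx1, hx2⟩ ?_
      intro hval
      exact hne (Subtype.ext hval)
    · exact absurd h1 (Set.disjoint_left.mp hdisj.symm hy1)
  have hcaseY : ∀ a : ↥S, (a.1.1 : ℕ → Bool) ∉ X → π a ∈ Y ×ˢ Y := by
    intro a h1
    rcases a.2 with ⟨hx1, _, _⟩ | ⟨hy1, hy2⟩
    · exact absurd hx1 h1
    · exact ⟨hy1, hy2⟩
  set δ : ↥S → ℝ := fun a => if h : ∃ n, π a ∈ C n then (2⁻¹ : ℝ) ^ (Nat.find h) else 0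
    with hδdef
  have hδnn : ∀ a, 0 ≤ δ a := by
    intro a
    rw [hδdef]
    dsimp only
    split
    · positivity
    · exact le_refl 0
  have hδposX : ∀ a : ↥S, (a.1.1 : ℕ → Bool) ∈ X → 0 < δ a := by
    intro a h1
    rw [hδdef]; dsimp only
    rw [dif_pos (hcaseX a h1)]
    positivity
  have hδY : ∀ a : ↥S, (a.1.1 : ℕ → Bool) ∉ X → δ a = 0 := by
    intro a h1
    rw [hδdef]; dsimp only
    rw [dif_neg]
    rintro ⟨n, hn⟩
    exact hCY n (π a) (hcaseY a h1) hn
  set ρ : ↥S → ↥S → ℝ := fun a b =>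
    if a = b then 0 else max (d (π a) (π b)) (max (δ a) (δ b)) with hρdef
  have hρself : ∀ a, ρ a a = 0 := fun a => if_pos rfl
  have hρne : ∀ a b, a ≠ b → ρ a b = max (d (π a) (π b)) (max (δ a) (δ b)) :=
    fun a b h => if_neg h
  have hρnn : ∀ a b, 0 ≤ ρ a b := by
    intro a b
    by_cases h : a = b
    · rw [h, hρself]
    · rw [hρne a b h]
      exact le_max_of_le_left (hdnn _ _)
  have hρcomm : ∀ a b, ρ a b = ρ b a := by
    intro a b
    by_cases h : a = b
    · rw [h]
    · rw [hρne a b h, hρne b a (Ne.symm h), hdc, max_comm (δ a)]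
  have hρd : ∀ a b, d (π a) (π b) ≤ ρ a b := by
    intro a b
    by_cases h : a = b
    · subst h; rw [hρself, hd0]
    · rw [hρne a b h]; exact le_max_left _ _
  have hρδ₁ : ∀ a b, a ≠ b → δ a ≤ ρ a b := by
    intro a b h
    rw [hρne a b h]; exact le_max_of_le_right (le_max_left _ _)
  have hρδ₂ : ∀ a b, a ≠ b → δ b ≤ ρ a b := by
    intro a b h
    rw [hρne a b h]; exact le_max_of_le_right (le_max_right _ _)
  have hρtri : ∀ a b c, ρ a c ≤ ρ a b + ρ b c := by
    intro a b c
    by_cases hac : a = c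
    · rw [hac, hρself]; exact add_nonneg (hρnn _ _) (hρnn _ _)
    by_cases hab : a = b
    · rw [hab, hρself, zero_add]
    by_cases hbc : b = c
    · rw [hbc, hρself, add_zero]
    rw [hρne a c hac]
    apply max_le
    · exact (hdt (π a) (π b) (π c)).trans (add_le_add (hρd a b) (hρd b c))
    · apply max_le
      · exact (hρδ₁ a b hab).trans (le_add_of_nonneg_right (hρnn b c))
      · exact (hρδ₂ b c hbc).trans (le_add_of_nonneg_left (hρnn a b))
  have hρeq : ∀ a b, ρ a b = 0 → a = b := by
    intro a b h
    by_contra hne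
    have hpos : 0 < d (π a) (π b) := hdpos _ _ (fun he => hne (hπinj he))
    have hlt := hpos.trans_le (hρd a b)
    rw [h] at hlt
    exact lt_irrefl 0 hlt
  have hval : Continuous (Subtype.val : ↥(X ∪ Y) → (ℕ → Bool)) := by
    rw [continuous_iff_le_induced]
    exact michael_le _ _
  have hπcont : Continuous π := by
    rw [hπdef]
    exact (hval.comp (continuous_fst.comp continuous_subtype_val)).prodMk
      (hval.comp (continuous_snd.comp continuous_subtype_val))
  have hsing : ∀ a : ↥S, (a.1.1 : ℕ → Bool) ∈ X → (a.1.2 : ℕ → Bool) ∈ X → IsOpen {a} := by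
    intro a h1 h2
    have h1' : IsOpen[tX] {a.1.1} := michael_singleton h1
    have h2' : IsOpen[tX] {a.1.2} := michael_singleton h2
    have hprod : IsOpen (({a.1.1} : Set ↥(X ∪ Y)) ×ˢ ({a.1.2} : Set ↥(X ∪ Y))) := h1'.prod h2'
    have hpre := hprod.preimage (continuous_subtype_val : Continuous (Subtype.val : ↥S → _))
    convert hpre using 1
    ext b
    constructor
    · rintro rfl; exact ⟨rfl, rfl⟩
    · rintro ⟨hb1, hb2⟩
      apply Subtype.ext
      exact Prod.ext hb1 hb2
  have hopen : ∀ s : Set ↥S, IsOpen s ↔ ∀ a ∈ s, ∃ ε > 0, ∀ b, ρ a b < ε → b ∈ s := by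
    intro s
    constructor
    · intro hs a ha
      by_cases h1 : (a.1.1 : ℕ → Bool) ∈ X
      · refine ⟨δ a, hδposX a h1, fun b hb => ?_⟩
        by_cases hab : a = b
        · rwa [← hab]
        · exact absurd hb (not_lt.mpr (hρδ₁ a b hab))
      · obtain ⟨V, hV, hVs⟩ := isOpen_induced_iff.mp hs
        have haV : a.1 ∈ V := by rw [← hVs] at ha; exact ha
        obtain ⟨V₁, V₂, hV₁, hV₂, haV₁, haV₂, hVsub⟩ := isOpen_prod_iff.mp hV a.1.1 a.1.2 haV
        have h2 : (a.1.2 : ℕ → Bool) ∉ X := by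
          intro h2
          rcases a.2 with ⟨hx1, _, _⟩ | ⟨_, hy2⟩
          · exact h1 hx1
          · exact Set.disjoint_left.mp hdisj h2 hy2
        obtain ⟨W₁, hW₁, haW₁, hW₁sub⟩ := michael_sub_exists_open hV₁ haV₁ h1
        obtain ⟨W₂, hW₂, haW₂, hW₂sub⟩ := michael_sub_exists_open hV₂ haV₂ h2
        have hWnhds : W₁ ×ˢ W₂ ∈ nhds (π a) := (hW₁.prod hW₂).mem_nhds ⟨haW₁, haW₂⟩
        obtain ⟨ε, hε, hsub⟩ := (hdnhds (π a) _).mp hWnhds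
        refine ⟨ε, hε, fun b hb => ?_⟩
        by_cases hab : a = b
        · rwa [← hab]
        · have hd : d (π a) (π b) < ε := lt_of_le_of_lt (hρd a b) hb
          have hbW : π b ∈ W₁ ×ˢ W₂ := hsub hd
          have hbV : b.1 ∈ V₁ ×ˢ V₂ := ⟨hW₁sub hbW.1, hW₂sub hbW.2⟩
          rw [← hVs]
          exact hVsub hbV
    · intro hb
      rw [isOpen_iff_forall_mem_open]
      intro a ha
      obtain ⟨ε, hε, hball⟩ := hb a ha
      by_cases h1 : (a.1.1 : ℕ → Bool) ∈ X
      · have h2 : (a.1.2 : ℕ → Bool) ∈ X := by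
          rcases a.2 with ⟨_, hx2, _⟩ | ⟨hy1, _⟩
          · exact hx2
          · exact absurd h1 (fun h => Set.disjoint_left.mp hdisj h hy1)
        exact ⟨{a}, by rintro b rfl; exact ha, hsing a h1 h2, rfl⟩
      · have hπaY : π a ∈ Y ×ˢ Y := hcaseY a h1
        obtain ⟨N, hN⟩ := exists_pow_lt_of_lt_one hε (by norm_num : (2⁻¹ : ℝ) < 1)
        set K : Set ((ℕ → Bool) × (ℕ → Bool)) := ⋃ n ∈ Finset.range (N + 1), C n with hK
        have hKcl : IsClosed K := isClosed_biUnion_finset (fun n _ => hCcl n)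
        have hπaK : π a ∉ K := by
          rw [hK]
          simp only [Set.mem_iUnion, exists_prop, not_exists, not_and]
          intro n _
          exact hCY n (π a) hπaY
        have hKc : Kᶜ ∈ nhds (π a) := hKcl.isOpen_compl.mem_nhds hπaK
        obtain ⟨r, hr, hrsub⟩ := (hdnhds (π a) _).mp hKc
        refine ⟨π ⁻¹' {q | d (π a) q < min r ε}, ?_, (hdball _ _).preimage hπcont, ?_⟩
        · intro b hb'
          by_cases hab : a = b
          · rwa [← hab]
          apply hball b
          rw [hρne a b hab]
          have hdb : d (π a) (π b) < min r ε := hb'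
          refine max_lt (hdb.trans_le (min_le_right r ε)) (max_lt ?_ ?_)
          · rw [hδY a h1]; exact hε
          · by_cases hbC : ∃ n, π b ∈ C n
            · have hδb : δ b = (2⁻¹ : ℝ) ^ Nat.find hbC := dif_pos hbC
              rw [hδb]
              by_contra hcon
              push_neg at hcon
              have hlt : ((2 : ℝ)⁻¹) ^ N < (2⁻¹ : ℝ) ^ Nat.find hbC := lt_of_lt_of_le hN hcon
              have hfind : Nat.find hbC < N :=
                (pow_lt_pow_iff_right_of_lt_one₀ (by norm_num) (by norm_num)).mp hlt
              have hmem : π b ∈ K := by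
                rw [hK]
                exact Set.mem_biUnion (Finset.mem_range.mpr (by omega)) (Nat.find_spec hbC)
              exact absurd hmem
                (hrsub (show d (π a) (π b) < r from hdb.trans_le (min_le_left r ε)))
            · have hδb : δ b = 0 := dif_neg hbC
              rw [hδb]; exact hε
        · exact Set.mem_preimage.mpr (by rw [Set.mem_setOf_eq, hd0]; exact lt_min hr hε)
  exact (letI := MetricSpace.ofDistTopology ρ hρself hρcomm hρtri hopen hρeq
    (inferInstance : TopologicalSpace.MetrizableSpace ↥S))
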